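/- Let X be a finite set with n ≥ 1 elements. The maximum cardinality of a subsemilattice of T(X) is 2^{n-1}. -/

import Mathlib

def IsSubsemilattice {X : Type*} (S : Set (X → X)) : Prop :=
  S.Nonempty ∧ (∀ e ∈ S, e ∘ e = e) ∧ (∀ e ∈ S, ∀ f ∈ S, e ∘ f = f ∘ e) ∧
    (∀ e ∈ S, ∀ f ∈ S, e ∘ f ∈ S)

lemma ncard_sets_containing {X : Type*} [Fintype X] (x0 : X) :
    {A : Set X | x0 ∈ A}.ncard = 2 ^ (Fintype.card X - 1) := by
  classical
  have e : {A : Set X // x0 ∈ A} ≃ Set {y : X // ¬ y = x0} :=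
    { toFun := fun A => {y | (y : X) ∈ A.1}
      invFun := fun B => ⟨insert x0 (Subtype.val '' B), Set.mem_insert _ _⟩
      left_inv := by
        rintro ⟨A, hA⟩
        ext x
        simp only [Set.mem_insert_iff, Set.mem_image, Set.mem_setOf_eq, Subtype.exists,
          exists_and_right, exists_eq_right]
        constructor
        · rintro (rfl | ⟨h, hx⟩)
          · exact hA
          · exact hx
        · intro hx
          by_cases hx0 : x = x0
          · exact Or.inl hx0
          · exact Or.inr ⟨hx0, hx⟩
      right_inv := by
        intro B
        ext y
        simp only [Set.mem_setOf_eq, Set.mem_insert_iff, Set.mem_image]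
        constructor
        · rintro (hy | ⟨b, hb, hbe⟩)
          · exact absurd hy y.2
          · rwa [Subtype.ext hbe] at hb
        · intro hy
          exact Or.inr ⟨y, hy, rfl⟩ }
  have h1 : {A : Set X | x0 ∈ A}.ncard = Nat.card {A : Set X // x0 ∈ A} :=
    (Nat.card_coe_set_eq _).symm
  rw [h1, Nat.card_congr e, Nat.card_eq_fintype_card, Fintype.card_set,
    Fintype.card_subtype_compl, Fintype.card_subtype_eq]

theorem max_card_subsemilattice {X : Type*} [Fintype X] {n : ℕ}
    (hn : Fintype.card X = n) (hn1 : 1 ≤ n) :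
    IsGreatest {m : ℕ | ∃ S : Set (X → X), IsSubsemilattice S ∧ S.ncard = m}
      (2 ^ (n - 1)) := by
  classical
  have hX : Nonempty X := Fintype.card_pos_iff.mp (by omega)
  obtain ⟨x0⟩ := hX
  constructor
  · -- membership: construct a subsemilattice of the right size
    set φ : Set X → (X → X) := fun A x => if x ∈ A then x else x0 with hφ
    have hcomp : ∀ A B : Set X, x0 ∈ A → φ A ∘ φ B = φ (A ∩ B) := by
      intro A B hA
      funext x
      by_cases hxB : x ∈ B
      · by_cases hxA : x ∈ A <;> simp [hφ, hxA, hxB]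
      · simp [hφ, hxB, hA]
    refine ⟨φ '' {A | x0 ∈ A}, ⟨⟨?_, ?_, ?_, ?_⟩, ?_⟩⟩
    · exact ⟨φ Set.univ, ⟨Set.univ, trivial, rfl⟩⟩
    · rintro e ⟨A, hA, rfl⟩
      rw [hcomp A A hA, Set.inter_self]
    · rintro e ⟨A, hA, rfl⟩ f ⟨B, hB, rfl⟩
      rw [hcomp A B hA, hcomp B A hB, Set.inter_comm]
    · rintro e ⟨A, hA, rfl⟩ f ⟨B, hB, rfl⟩
      rw [hcomp A B hA]
      exact ⟨A ∩ B, ⟨hA, hB⟩, rfl⟩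
    · have hinj : Set.InjOn φ {A | x0 ∈ A} := by
        intro A hA B hB hAB
        ext x
        constructor
        · intro hxA
          have h1 : φ A x = x := by simp [hφ, hxA]
          have h2 : φ B x = x := by rw [← hAB]; exact h1
          by_cases hxB : x ∈ B
          · exact hxB
          · simp only [hφ, hxB, if_false] at h2
            rw [← h2]; exact hB
        · intro hxB
          have h1 : φ B x = x := by simp [hφ, hxB]
          have h2 : φ A x = x := by rw [hAB]; exact h1
          by_cases hxA : x ∈ A
          · exact hxA
          · simp only [hφ, hxA, if_false] at h2
            rw [← h2]; exact hA
      rw [Set.ncard_image_of_injOn hinj, ncard_sets_containing x0, hn]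
  · -- upper bound
    rintro m ⟨S, ⟨hne, hidem, hcomm, hclosed⟩, rfl⟩
    set Fix : (X → X) → Set X := fun e => {x | e x = x} with hFix
    have hFixinj : Set.InjOn Fix S := by
      intro e he f hf hef
      funext x
      have h1 : f (f x) = f x := congrFun (hidem f hf) x
      have h2 : e (f x) = f x := by
        have : f x ∈ Fix f := h1
        rw [← hef] at this; exact this
      have h3 : f (e x) = e x := by
        have h1' : e (e x) = e x := congrFun (hidem e he) x
        have : e x ∈ Fix e := h1'
        rw [hef] at this; exact this
      have hc : e (f x) = f (e x) := congrFun (hcomm e he f hf) x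
      rw [h2, h3] at hc
      exact hc.symm
    have hFixInter : ∀ e ∈ S, ∀ f ∈ S, Fix (e ∘ f) = Fix e ∩ Fix f := by
      intro e he f hf
      ext x
      constructor
      · intro h
        have h' : e (f x) = x := h
        have hc : ∀ y, e (f y) = f (e y) := fun y => congrFun (hcomm e he f hf) y
        have hfi : ∀ y, f (f y) = f y := fun y => congrFun (hidem f hf) y
        have hfx : f x = x := by
          calc f x = f (e (f x)) := by rw [h']
            _ = f (f (e x)) := by rw [hc]
            _ = f (e x) := hfi (e x)
            _ = e (f x) := (hc x).symm
            _ = x := h'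
        have hex : e x = x := by
          calc e x = e (f x) := by rw [hfx]
            _ = x := h'
        exact ⟨hex, hfx⟩
      · rintro ⟨h1, h2⟩
        show e (f x) = x
        rw [h2, h1]
    -- the family of fixed-point sets
    obtain ⟨e0, he0⟩ := hne
    have hFfin : (Fix '' S).Finite := Set.toFinite _
    obtain ⟨F0, hF0F, hmin⟩ : ∃ a ∈ Fix '' S, ∀ a' ∈ Fix '' S, id a' ≤ id a → id a = id a' := by
      obtain ⟨a, ha, h⟩ := Set.Finite.exists_minimalFor id (Fix '' S) hFfin
        ⟨Fix e0, Set.mem_image_of_mem _ he0⟩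
      exact ⟨a, ha, fun a' ha' hle => le_antisymm (h ha' hle) hle⟩
    have hF0sub : ∀ A ∈ Fix '' S, F0 ⊆ A := by
      rintro A ⟨f, hf, rfl⟩
      obtain ⟨e, he, rfl⟩ := hF0F
      have hmem : Fix (e ∘ f) ∈ Fix '' S := Set.mem_image_of_mem _ (hclosed e he f hf)
      have hle : Fix (e ∘ f) ⊆ Fix e := by
        rw [hFixInter e he f hf]; exact Set.inter_subset_left
      have heq := hmin _ hmem hle
      simp only [id] at heq
      rw [heq, hFixInter e he f hf]
      exact Set.inter_subset_right
    -- F0 is nonempty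
    have hF0ne : F0.Nonempty := by
      obtain ⟨e, he, rfl⟩ := hF0F
      exact ⟨e x0, congrFun (hidem e he) x0⟩
    obtain ⟨z, hz⟩ := hF0ne
    have hsub : Fix '' S ⊆ {A : Set X | z ∈ A} := fun A hA => hF0sub A hA hz
    calc S.ncard = (Fix '' S).ncard := (Set.ncard_image_of_injOn hFixinj).symm
      _ ≤ {A : Set X | z ∈ A}.ncard := Set.ncard_le_ncard hsub (Set.toFinite _)
      _ = 2 ^ (n - 1) := by rw [ncard_sets_containing z, hn]
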